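/- Let η ∈ (0, 1) and q₁, q₂, q₃, q₄ > 0, define G_η(z) = 1 − (η√(1−z) − √((1−η²)z))² for z ∈ [0, 1], and define R(z) = log(1 + 1/(q₁ z + q₂)) − log(1 + 1/(q₃ G_η(z) + q₄)) for z ∈ (0, 1). If z′ ∈ (0, 1) satisfies R′(z′) = 0 and q₁ z′ + q₂ < q₃ G_η(z′) + q₄, then R″(z′) < 0. -/

import Mathlib

noncomputable def sfn (z : ℝ) : ℝ := Real.sqrt (z - z ^ 2)

lemma sfn_pos {z : ℝ} (h0 : 0 < z) (h1 : z < 1) : 0 < sfn z :=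
  Real.sqrt_pos.2 (by nlinarith)

lemma sfn_sq {z : ℝ} (h0 : 0 ≤ z) (h1 : z ≤ 1) : sfn z ^ 2 = z - z ^ 2 :=
  Real.sq_sqrt (by nlinarith)

lemma hasDerivAt_sfn {z : ℝ} (h0 : 0 < z) (h1 : z < 1) :
    HasDerivAt sfn ((1 - 2 * z) / (2 * sfn z)) z := by
  have hne : z - z ^ 2 ≠ 0 := by nlinarith
  have hinner : HasDerivAt (fun z : ℝ => z - z ^ 2) (1 - 2 * z) z := by
    simpa using (hasDerivAt_id z).fun_sub (hasDerivAt_pow 2 z)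
  have h := (Real.hasDerivAt_sqrt hne).comp z hinner
  refine h.congr_deriv ?_
  unfold sfn
  field_simp

lemma hasDerivAt_sfn1 {z : ℝ} (h0 : 0 < z) (h1 : z < 1) :
    HasDerivAt (fun z => (1 - 2 * z) / (2 * sfn z)) (-(1 / (4 * sfn z ^ 3))) z := by
  have hs := sfn_pos h0 h1
  have hsq := sfn_sq h0.le h1.le
  have hnum : HasDerivAt (fun z : ℝ => 1 - 2 * z) (-2) z := by
    simpa using ((hasDerivAt_id z).const_mul 2).const_sub 1
  have hden : HasDerivAt (fun z => 2 * sfn z) (2 * ((1 - 2 * z) / (2 * sfn z))) z :=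
    (hasDerivAt_sfn h0 h1).const_mul 2
  have h := hnum.fun_div hden (by positivity)
  refine h.congr_deriv ?_
  field_simp
  linear_combination (-16) * hsq

lemma main_ineq (q₁ q₃ a b g c : ℝ) (hq₁ : 0 < q₁) (hq₃ : 0 < q₃) (ha : 0 < a) (hb : 0 < b)
    (hab : a < b) (hc : c < 0) (key : q₃ * g * (a ^ 2 + a) = q₁ * (b ^ 2 + b)) :
    (0 * (a ^ 2 + a) - -q₁ * (2 * a * q₁ + q₁)) / (a ^ 2 + a) ^ 2 +
      (q₃ * c * (b ^ 2 + b) - q₃ * g * (2 * b * (q₃ * g) + q₃ * g)) / (b ^ 2 + b) ^ 2 < 0 := by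
  have hD1 : (0:ℝ) < a ^ 2 + a := by positivity
  have hD2 : (0:ℝ) < b ^ 2 + b := by positivity
  rw [div_add_div _ _ (by positivity) (by positivity)]
  apply div_neg_of_neg_of_pos _ (by positivity)
  have key2 : (q₃ * g) ^ 2 * (a ^ 2 + a) ^ 2 = q₁ ^ 2 * (b ^ 2 + b) ^ 2 := by
    linear_combination (q₃ * g * (a ^ 2 + a) + q₁ * (b ^ 2 + b)) * key
  have hNeq : (0 * (a ^ 2 + a) - -q₁ * (2 * a * q₁ + q₁)) * ((b ^ 2 + b) ^ 2) +
      ((a ^ 2 + a) ^ 2) * (q₃ * c * (b ^ 2 + b) - q₃ * g * (2 * b * (q₃ * g) + q₃ * g)) =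
      2 * q₁ ^ 2 * (b ^ 2 + b) ^ 2 * (a - b) + q₃ * c * (b ^ 2 + b) * (a ^ 2 + a) ^ 2 := by
    linear_combination (-(2 * b + 1)) * key2
  rw [hNeq]
  have h1 : 2 * q₁ ^ 2 * (b ^ 2 + b) ^ 2 * (a - b) < 0 := by
    have : (0:ℝ) < 2 * q₁ ^ 2 * (b ^ 2 + b) ^ 2 := by positivity
    nlinarith
  have h2 : q₃ * c * (b ^ 2 + b) * (a ^ 2 + a) ^ 2 < 0 := by
    have hp : (0:ℝ) < q₃ * (b ^ 2 + b) * (a ^ 2 + a) ^ 2 := by positivity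
    nlinarith
  linarith

/-- The cooperative-jamming secrecy-rate objective
`R(z) = log(1 + 1/(q₁z + q₂)) − log(1 + 1/(q₃ G_η(z) + q₄))` is strictly concave at any
stationary point `z′ ∈ (0,1)` at which it is positive (`q₁z′ + q₂ < q₃G_η(z′) + q₄`). -/
theorem stmt11 (η q₁ q₂ q₃ q₄ : ℝ) (hη0 : 0 < η) (hη1 : η < 1)
    (hq₁ : 0 < q₁) (hq₂ : 0 < q₂) (hq₃ : 0 < q₃) (hq₄ : 0 < q₄)
    (G R : ℝ → ℝ)
    (hG : ∀ z, G z = 1 - (η * Real.sqrt (1 - z) - Real.sqrt ((1 - η ^ 2) * z)) ^ 2)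
    (hR : ∀ z, R z = Real.log (1 + 1 / (q₁ * z + q₂)) -
      Real.log (1 + 1 / (q₃ * G z + q₄)))
    (z' : ℝ) (hz' : z' ∈ Set.Ioo (0 : ℝ) 1)
    (hstat : deriv R z' = 0)
    (hlt : q₁ * z' + q₂ < q₃ * G z' + q₄) :
    deriv (deriv R) z' < 0 := by
  obtain ⟨hz0, hz1⟩ := hz'
  set m : ℝ := Real.sqrt (1 - η ^ 2) with hmdef
  have hm0 : 0 < m := Real.sqrt_pos.2 (by nlinarith)
  have hmsq : m ^ 2 = 1 - η ^ 2 := Real.sq_sqrt (by nlinarith)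
  -- explicit form of G
  set Gh : ℝ → ℝ := fun z => (1 - η ^ 2) + (2 * η ^ 2 - 1) * z + 2 * η * m * sfn z with hGhdef
  set G1 : ℝ → ℝ := fun z => (2 * η ^ 2 - 1) + 2 * η * m * ((1 - 2 * z) / (2 * sfn z)) with hG1def
  have hGeq : ∀ z ∈ Set.Ioo (0 : ℝ) 1, G z = Gh z := by
    intro z hz
    obtain ⟨h0, h1⟩ := hz
    have ha : Real.sqrt (1 - z) ^ 2 = 1 - z := Real.sq_sqrt (by linarith)
    have hb : Real.sqrt ((1 - η ^ 2) * z) ^ 2 = (1 - η ^ 2) * z :=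
      Real.sq_sqrt (by nlinarith)
    have hab : Real.sqrt (1 - z) * Real.sqrt ((1 - η ^ 2) * z) = m * sfn z := by
      rw [← Real.sqrt_mul (by linarith : (0:ℝ) ≤ 1 - z)]
      have he : (1 - z) * ((1 - η ^ 2) * z) = (1 - η ^ 2) * (z - z ^ 2) := by ring
      rw [he, Real.sqrt_mul (by nlinarith : (0:ℝ) ≤ 1 - η ^ 2)]
      rfl
    rw [hG, hGhdef]
    linear_combination (-(η ^ 2)) * ha - hb + (2 * η) * hab
  have hGh_nonneg : ∀ z ∈ Set.Ioo (0 : ℝ) 1, 0 ≤ Gh z := by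
    intro z hz
    obtain ⟨h0, h1⟩ := hz
    have hs : 0 ≤ sfn z := Real.sqrt_nonneg _
    have : 0 ≤ 2 * η * m * sfn z := by positivity
    simp only [hGhdef]
    nlinarith [hη0.le, hη1.le]
  -- derivative of Gh
  have hGhd : ∀ z ∈ Set.Ioo (0 : ℝ) 1, HasDerivAt Gh (G1 z) z := by
    intro z hz
    obtain ⟨h0, h1⟩ := hz
    have h := (((hasDerivAt_id z).const_mul (2 * η ^ 2 - 1)).const_add (1 - η ^ 2)).fun_add
      ((hasDerivAt_sfn h0 h1).const_mul (2 * η * m))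
    simpa [hGhdef, hG1def, mul_comm] using h
  -- positivity of denominators
  have hA : ∀ z ∈ Set.Ioo (0 : ℝ) 1, 0 < q₁ * z + q₂ := by
    intro z hz; nlinarith [hz.1]
  have hB : ∀ z ∈ Set.Ioo (0 : ℝ) 1, 0 < q₃ * Gh z + q₄ := by
    intro z hz; nlinarith [hGh_nonneg z hz]
  -- first derivative of R
  set F : ℝ → ℝ := fun z => -q₁ / ((q₁ * z + q₂) ^ 2 + (q₁ * z + q₂)) +
      q₃ * G1 z / ((q₃ * Gh z + q₄) ^ 2 + (q₃ * Gh z + q₄)) with hFdef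
  have hRd : ∀ z ∈ Set.Ioo (0 : ℝ) 1, HasDerivAt R (F z) z := by
    intro z hz
    obtain ⟨h0, h1⟩ := hz
    have hAz := hA z ⟨h0, h1⟩
    have hBz := hB z ⟨h0, h1⟩
    have hA' : HasDerivAt (fun z => q₁ * z + q₂) q₁ z := by
      simpa using ((hasDerivAt_id z).const_mul q₁).add_const q₂
    have hiA : HasDerivAt (fun z => 1 + 1 / (q₁ * z + q₂))
        (-q₁ / (q₁ * z + q₂) ^ 2) z := by
      have := (hA'.inv hAz.ne').const_add 1
      simpa [one_div] using this
    have hlogA : HasDerivAt (fun z => Real.log (1 + 1 / (q₁ * z + q₂)))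
        ((-q₁ / (q₁ * z + q₂) ^ 2) / (1 + 1 / (q₁ * z + q₂))) z :=
      hiA.log (by positivity)
    have hB' : HasDerivAt (fun z => q₃ * Gh z + q₄) (q₃ * G1 z) z :=
      ((hGhd z ⟨h0, h1⟩).const_mul q₃).add_const q₄
    have hiB : HasDerivAt (fun z => 1 + 1 / (q₃ * Gh z + q₄))
        (-(q₃ * G1 z) / (q₃ * Gh z + q₄) ^ 2) z := by
      have := (hB'.inv hBz.ne').const_add 1
      simpa [one_div] using this
    have hlogB : HasDerivAt (fun z => Real.log (1 + 1 / (q₃ * Gh z + q₄)))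
        ((-(q₃ * G1 z) / (q₃ * Gh z + q₄) ^ 2) / (1 + 1 / (q₃ * Gh z + q₄))) z :=
      hiB.log (by positivity)
    have h := hlogA.sub hlogB
    have heq : R =ᶠ[nhds z] (fun z => Real.log (1 + 1 / (q₁ * z + q₂)) -
        Real.log (1 + 1 / (q₃ * Gh z + q₄))) :=
      Filter.eventuallyEq_of_mem (isOpen_Ioo.mem_nhds (⟨h0, h1⟩ : z ∈ Set.Ioo (0:ℝ) 1))
        (fun x hx => by rw [hR, hGeq x hx])
    have h2 := h.congr_of_eventuallyEq heq
    have hkey : ∀ a b g : ℝ, 0 < a → 0 < b →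
        -q₁ / (a ^ 2 + a) + q₃ * g / (b ^ 2 + b) =
        (-q₁ / a ^ 2) / (1 + 1 / a) - (-(q₃ * g) / b ^ 2) / (1 + 1 / b) := by
      intro a b g ha hb
      have h1 : a ^ 2 + a ≠ 0 := by positivity
      have h2 : b ^ 2 + b ≠ 0 := by positivity
      have h3 : 1 + 1 / a ≠ 0 := by positivity
      have h4 : 1 + 1 / b ≠ 0 := by positivity
      field_simp
      ring
    have hgoal : F z = (-q₁ / (q₁ * z + q₂) ^ 2) / (1 + 1 / (q₁ * z + q₂)) -
        (-(q₃ * G1 z) / (q₃ * Gh z + q₄) ^ 2) / (1 + 1 / (q₃ * Gh z + q₄)) := by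
      rw [hFdef]
      exact hkey _ _ _ hAz hBz
    rw [hgoal]
    exact h2
  -- reduce second derivative of R to derivative of F
  have hev : deriv R =ᶠ[nhds z'] F :=
    Filter.eventuallyEq_of_mem (isOpen_Ioo.mem_nhds (⟨hz0, hz1⟩ : z' ∈ Set.Ioo (0:ℝ) 1))
      (fun x hx => (hRd x hx).deriv)
  rw [hev.deriv_eq]
  have hsz := sfn_pos hz0 hz1
  have hAz := hA z' ⟨hz0, hz1⟩
  have hBz := hB z' ⟨hz0, hz1⟩
  have hD1pos : (0:ℝ) < (q₁ * z' + q₂) ^ 2 + (q₁ * z' + q₂) := by positivity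
  have hD2pos : (0:ℝ) < (q₃ * Gh z' + q₄) ^ 2 + (q₃ * Gh z' + q₄) := by positivity
  have hA' : HasDerivAt (fun z => q₁ * z + q₂) q₁ z' := by
    simpa using ((hasDerivAt_id z').const_mul q₁).add_const q₂
  have hD1 : HasDerivAt (fun z => (q₁ * z + q₂) ^ 2 + (q₁ * z + q₂))
      (2 * (q₁ * z' + q₂) * q₁ + q₁) z' := by
    simpa using (hA'.fun_pow 2).fun_add hA'
  have ht1 : HasDerivAt (fun z => -q₁ / ((q₁ * z + q₂) ^ 2 + (q₁ * z + q₂)))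
      ((0 * ((q₁ * z' + q₂) ^ 2 + (q₁ * z' + q₂)) - -q₁ * (2 * (q₁ * z' + q₂) * q₁ + q₁)) /
        ((q₁ * z' + q₂) ^ 2 + (q₁ * z' + q₂)) ^ 2) z' :=
    (hasDerivAt_const z' (-q₁)).div hD1 hD1pos.ne'
  have hG1d : HasDerivAt G1 (2 * η * m * -(1 / (4 * sfn z' ^ 3))) z' := by
    have h := ((hasDerivAt_sfn1 hz0 hz1).const_mul (2 * η * m)).const_add (2 * η ^ 2 - 1)
    rw [hG1def]
    exact h
  have hB' : HasDerivAt (fun z => q₃ * Gh z + q₄) (q₃ * G1 z') z' :=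
    ((hGhd z' ⟨hz0, hz1⟩).const_mul q₃).add_const q₄
  have hD2 : HasDerivAt (fun z => (q₃ * Gh z + q₄) ^ 2 + (q₃ * Gh z + q₄))
      (2 * (q₃ * Gh z' + q₄) * (q₃ * G1 z') + q₃ * G1 z') z' := by
    simpa using (hB'.fun_pow 2).fun_add hB'
  have hN2 : HasDerivAt (fun z => q₃ * G1 z)
      (q₃ * (2 * η * m * -(1 / (4 * sfn z' ^ 3)))) z' := hG1d.const_mul q₃
  have ht2 := hN2.div hD2 hD2pos.ne'
  have hFd := ht1.add ht2
  have hFd' : HasDerivAt F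
      ((0 * ((q₁ * z' + q₂) ^ 2 + (q₁ * z' + q₂)) - -q₁ * (2 * (q₁ * z' + q₂) * q₁ + q₁)) /
        ((q₁ * z' + q₂) ^ 2 + (q₁ * z' + q₂)) ^ 2 +
       (q₃ * (2 * η * m * -(1 / (4 * sfn z' ^ 3))) * ((q₃ * Gh z' + q₄) ^ 2 + (q₃ * Gh z' + q₄)) -
         q₃ * G1 z' * (2 * (q₃ * Gh z' + q₄) * (q₃ * G1 z') + q₃ * G1 z')) /
        ((q₃ * Gh z' + q₄) ^ 2 + (q₃ * Gh z' + q₄)) ^ 2) z' := by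
    rw [hFdef]
    exact hFd
  rw [hFd'.deriv]
  -- stationarity
  have hFz : F z' = 0 := by rw [← (hRd z' ⟨hz0, hz1⟩).deriv]; exact hstat
  simp only [hFdef] at hFz
  have key : q₃ * G1 z' * ((q₁ * z' + q₂) ^ 2 + (q₁ * z' + q₂)) =
      q₁ * ((q₃ * Gh z' + q₄) ^ 2 + (q₃ * Gh z' + q₄)) := by
    field_simp [hD1pos.ne', hD2pos.ne'] at hFz
    linarith
  have hlt' : q₁ * z' + q₂ < q₃ * Gh z' + q₄ := by rw [← hGeq z' ⟨hz0, hz1⟩]; exact hlt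
  have hc : 2 * η * m * -(1 / (4 * sfn z' ^ 3)) < 0 := by
    have h : (0:ℝ) < 2 * η * m * (1 / (4 * sfn z' ^ 3)) := by positivity
    linarith
  exact main_ineq q₁ q₃ _ _ _ _ hq₁ hq₃ hAz hBz hlt' hc key
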